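/- Let G be a group such that every finitely generated subgroup H of G is solvable and has finite quotient H/Z(H). Then the derived subgroup G' of G is periodic (every element of G' has finite order). -/

import Mathlib

open Subgroup
open scoped commutatorElement

/-- Multiplying the left argument of a commutator by a central element does nothing. -/
lemma commutatorElement_mul_center_left {H : Type*} [Group H] (x y z : H)
    (hz : z ∈ Subgroup.center H) : ⁅x * z, y⁆ = ⁅x, y⁆ := by
  have hzy : ∀ g : H, g * z = z * g := Subgroup.mem_center_iff.mp hz
  rw [commutatorElement_def, commutatorElement_def]
  calc x * z * y * (x * z)⁻¹ * y⁻¹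
      = x * (z * y * z⁻¹) * x⁻¹ * y⁻¹ := by group
    _ = x * (y * z * z⁻¹) * x⁻¹ * y⁻¹ := by rw [hzy y]
    _ = x * y * x⁻¹ * y⁻¹ := by group

/-- Commutators only depend on cosets modulo the center. -/
lemma commutatorElement_mul_center {H : Type*} [Group H] (a b z w : H)
    (hz : z ∈ Subgroup.center H) (hw : w ∈ Subgroup.center H) :
    ⁅a * z, b * w⁆ = ⁅a, b⁆ := by
  rw [← inv_inv ⁅a * z, b * w⁆, commutatorElement_inv,
    commutatorElement_mul_center_left b _ w hw, ← commutatorElement_inv,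
    commutatorElement_mul_center_left a _ z hz, inv_inv]

/-- If the center has finite index, then the set of commutators is finite. -/
lemma finite_commutatorSet_of_finiteIndex_center (H : Type*) [Group H]
    [(Subgroup.center H).FiniteIndex] : Finite (commutatorSet H) := by
  set Z := Subgroup.center H
  have : Finite (H ⧸ Z) := Subgroup.finite_quotient_of_finiteIndex (H := Z)
  set f : (H ⧸ Z) × (H ⧸ Z) → H := fun p => ⁅p.1.out, p.2.out⁆ with hf
  have hsub : commutatorSet H ⊆ Set.range f := by
    rintro x ⟨a, b, rfl⟩
    refine ⟨(QuotientGroup.mk a, QuotientGroup.mk b), ?_⟩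
    have ha : a⁻¹ * (QuotientGroup.mk a : H ⧸ Z).out ∈ Z := by
      rw [← QuotientGroup.eq]
      exact (QuotientGroup.out_eq' _).symm
    have hb : b⁻¹ * (QuotientGroup.mk b : H ⧸ Z).out ∈ Z := by
      rw [← QuotientGroup.eq]
      exact (QuotientGroup.out_eq' _).symm
    have ea : (QuotientGroup.mk a : H ⧸ Z).out =
        a * (a⁻¹ * (QuotientGroup.mk a : H ⧸ Z).out) := by group
    have eb : (QuotientGroup.mk b : H ⧸ Z).out =
        b * (b⁻¹ * (QuotientGroup.mk b : H ⧸ Z).out) := by group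
    simp only [hf]
    rw [ea, eb, commutatorElement_mul_center a b _ _ ha hb]
  exact Set.Finite.to_subtype ((Set.finite_range f).subset hsub)

/-- If every finitely generated subgroup `H` of `G` is solvable with
`H / Z(H)` finite, then the derived subgroup of `G` is periodic. -/
theorem commutator_periodic {G : Type*} [Group G]
    (h : ∀ H : Subgroup G, H.FG → IsSolvable H ∧ (Subgroup.center H).FiniteIndex) :
    ∀ g ∈ commutator G, IsOfFinOrder g := by
  intro g hg
  rw [commutator_eq_closure] at hg
  -- express g as a product of a list of commutators
  have hg' : g ∈ Submonoid.closure (commutatorSet G ∪ (commutatorSet G)⁻¹) := by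
    rw [← Subgroup.closure_toSubmonoid]; exact hg
  obtain ⟨l, hl, rfl⟩ := Submonoid.exists_list_of_mem_closure hg'
  have hl' : ∀ x ∈ l, x ∈ commutatorSet G := by
    intro x hx
    rcases hl x hx with hx' | hx'
    · exact hx'
    · obtain ⟨a, b, hab⟩ := hx'
      exact ⟨b, a, by rw [← commutatorElement_inv, hab, inv_inv]⟩
  classical
  -- pick generators for each commutator in the list
  set p : G → G × G := fun x =>
    if hx : x ∈ commutatorSet G then (hx.choose, hx.choose_spec.choose) else (1, 1) with hp
  have hps : ∀ x ∈ commutatorSet G, ⁅(p x).1, (p x).2⁆ = x := by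
    intro x hx
    simp only [hp, dif_pos hx]
    exact hx.choose_spec.choose_spec
  set T : Finset G := (l.map fun x => (p x).1).toFinset ∪ (l.map fun x => (p x).2).toFinset
    with hT
  set H : Subgroup G := Subgroup.closure (T : Set G) with hH
  have hfg : H.FG := ⟨T, rfl⟩
  obtain ⟨-, hZ⟩ := h H hfg
  have hfin : Finite (commutatorSet H) := finite_commutatorSet_of_finiteIndex_center H
  have hcfin : Finite (_root_.commutator H) := inferInstance
  -- the image of the commutator subgroup of H in G
  set S : Subgroup G := (_root_.commutator H).map H.subtype with hS
  have hSfin : Finite S := by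
    have e := Subgroup.equivMapOfInjective (_root_.commutator H) H.subtype
      H.subtype_injective
    exact Finite.of_equiv _ e.toEquiv
  have hgS : l.prod ∈ S := by
    refine Subgroup.list_prod_mem S ?_
    intro x hx
    have hxc := hl' x hx
    have h1 : (p x).1 ∈ H := by
      apply Subgroup.subset_closure
      simp only [hT, Finset.coe_union, Set.mem_union, Finset.mem_coe, List.mem_toFinset,
        List.mem_map]
      exact Or.inl ⟨x, hx, rfl⟩
    have h2 : (p x).2 ∈ H := by
      apply Subgroup.subset_closure
      simp only [hT, Finset.coe_union, Set.mem_union, Finset.mem_coe, List.mem_toFinset,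
        List.mem_map]
      exact Or.inr ⟨x, hx, rfl⟩
    refine ⟨⁅(⟨(p x).1, h1⟩ : H), (⟨(p x).2, h2⟩ : H)⁆, ?_, ?_⟩
    · exact Subgroup.commutator_mem_commutator (Subgroup.mem_top _) (Subgroup.mem_top _)
    · have : H.subtype ⁅(⟨(p x).1, h1⟩ : H), (⟨(p x).2, h2⟩ : H)⁆ = ⁅(p x).1, (p x).2⁆ := rfl
      rw [this]
      exact hps x hxc
  -- elements of finite subgroups have finite order
  have : IsOfFinOrder (⟨l.prod, hgS⟩ : S) := isOfFinOrder_of_finite _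
  obtain ⟨n, hn, hpow⟩ := isOfFinOrder_iff_pow_eq_one.mp this
  refine isOfFinOrder_iff_pow_eq_one.mpr ⟨n, hn, ?_⟩
  have := congrArg (Subtype.val) hpow
  simpa using this
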